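/- Let A be an s×t matrix over a finite alphabet Γ, and let A' be an s'×t matrix obtained from A by deleting some set of rows of A, each of which is equal to the row of A immediately preceding it. There exist constants c₁, k₁, c₂, k₂ > 0 (depending only on A) such that for every real ε ∈ (0,1] and every integer n ≥ c₁·ε^{-k₁}: every n×n matrix M over Γ that contains at least ε·n^{s'+t} copies of A' also contains at least c₂·ε^{k₂}·n^{s+t} copies of A. -/

import Mathlib

/-- `(r, c)` is a copy of the `s × t` matrix `A` inside the `m × n` matrix `M`. -/
def IsCopy {Γ : Type*} {s t m n : ℕ} (A : Fin s → Fin t → Γ) (M : Fin m → Fin n → Γ)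
    (r : Fin s → Fin m) (c : Fin t → Fin n) : Prop :=
  StrictMono r ∧ StrictMono c ∧ ∀ i j, M (r i) (c j) = A i j

/-- The number of copies of `A` in `M`. -/
noncomputable def copyCount {Γ : Type*} {s t m n : ℕ} (A : Fin s → Fin t → Γ)
    (M : Fin m → Fin n → Γ) : ℕ :=
  Set.ncard {p : (Fin s → Fin m) × (Fin t → Fin n) | IsCopy A M p.1 p.2}

private lemma copyCount_eq_card {Γ : Type*} {s t m n : ℕ} (A : Fin s → Fin t → Γ)
    (M : Fin m → Fin n → Γ)
    [DecidablePred fun p : (Fin s → Fin m) × (Fin t → Fin n) => IsCopy A M p.1 p.2] :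
    copyCount A M =
      (Finset.univ.filter fun p : (Fin s → Fin m) × (Fin t → Fin n) => IsCopy A M p.1 p.2).card := by
  rw [copyCount, ← Set.ncard_coe_finset]
  congr 1
  ext p
  simp

private lemma copyCount_le {Γ : Type*} {s t m n : ℕ} (A : Fin s → Fin t → Γ)
    (M : Fin m → Fin n → Γ) : copyCount A M ≤ m ^ s * n ^ t := by
  classical
  rw [copyCount_eq_card]
  calc (Finset.univ.filter fun p : (Fin s → Fin m) × (Fin t → Fin n) => IsCopy A M p.1 p.2).card
      ≤ (Finset.univ : Finset ((Fin s → Fin m) × (Fin t → Fin n))).card := Finset.card_filter_le _ _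
    _ = m ^ s * n ^ t := by
        simp [Fintype.card_fun]

private lemma strictMono_insertNth {N n : ℕ} {i : Fin (N + 1)} {x : Fin n} {f : Fin N → Fin n}
    (hf : StrictMono f) (h1 : ∀ k, i.succAbove k < i → f k < x)
    (h2 : ∀ k, i < i.succAbove k → x < f k) : StrictMono (i.insertNth x f) := by
  intro a b hab
  rcases eq_or_ne i a with rfl | ha
  · rcases eq_or_ne i b with rfl | hb
    · exact absurd hab (lt_irrefl _)
    · obtain ⟨k, rfl⟩ := Fin.exists_succAbove_eq hb.symm
      rw [Fin.insertNth_apply_same, Fin.insertNth_apply_succAbove]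
      exact h2 k hab
  · obtain ⟨k, rfl⟩ := Fin.exists_succAbove_eq ha.symm
    rcases eq_or_ne i b with rfl | hb
    · rw [Fin.insertNth_apply_same, Fin.insertNth_apply_succAbove]
      exact h1 k hab
    · obtain ⟨k', rfl⟩ := Fin.exists_succAbove_eq hb.symm
      rw [Fin.insertNth_apply_succAbove, Fin.insertNth_apply_succAbove]
      exact hf (Fin.succAbove_lt_succAbove_iff.mp hab)

private lemma insertNth_app_same {N n : ℕ} (i : Fin (N + 1)) (x : Fin n) (f : Fin N → Fin n) :
    Fin.insertNth (α := fun _ => Fin n) i x f i = x :=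
  Fin.insertNth_apply_same (α := fun _ => Fin n) i x f

private lemma insertNth_app_succAbove {N n : ℕ} (i : Fin (N + 1)) (x : Fin n) (f : Fin N → Fin n)
    (j : Fin N) : Fin.insertNth (α := fun _ => Fin n) i x f (i.succAbove j) = f j :=
  Fin.insertNth_apply_succAbove (α := fun _ => Fin n) i x f j

private abbrev insF {N n : ℕ} (i : Fin (N + 1)) (x : Fin n) (f : Fin N → Fin n) :
    Fin (N + 1) → Fin n :=
  Fin.insertNth (α := fun _ => Fin n) i x f

private lemma insF_same {N n : ℕ} (i : Fin (N + 1)) (x : Fin n) (f : Fin N → Fin n) :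
    insF i x f i = x :=
  insertNth_app_same i x f

private lemma insF_succAbove {N n : ℕ} (i : Fin (N + 1)) (x : Fin n) (f : Fin N → Fin n)
    (j : Fin N) : insF i x f (i.succAbove j) = f j :=
  insertNth_app_succAbove i x f j

private lemma succAbove_val {N : ℕ} (p : Fin (N + 1)) (i : Fin N) :
    ((p.succAbove i : Fin (N + 1)) : ℕ) = if (i : ℕ) < (p : ℕ) then (i : ℕ) else (i : ℕ) + 1 := by
  rcases lt_or_ge (Fin.castSucc i) p with h | h
  · rw [Fin.succAbove_of_castSucc_lt _ _ h]
    have : (i : ℕ) < (p : ℕ) := h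
    simp [this]
  · rw [Fin.succAbove_of_le_castSucc _ _ h]
    have : ¬ ((i : ℕ) < (p : ℕ)) := by simpa [Fin.le_def] using h
    simp [this]

open Finset in
private lemma step_lemma {Γ : Type*} {m t n : ℕ} (A : Fin (m + 2) → Fin t → Γ)
    (i₁ : Fin (m + 1)) (hrow : ∀ l, A i₁.castSucc l = A i₁.succ l)
    (M : Fin n → Fin n → Γ) :
    ((copyCount (fun k l => A (i₁.succ.succAbove k) l) M : ℝ)) ^ 2 ≤
      (n : ℝ) ^ (m + t) *
        (2 * (copyCount A M : ℝ) + (copyCount (fun k l => A (i₁.succ.succAbove k) l) M : ℝ)) := by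
  classical
  set A'' : Fin (m + 1) → Fin t → Γ := fun k l => A (i₁.succ.succAbove k) l with hA''def
  set q : (Fin m → Fin n) × (Fin t → Fin n) → ℕ := fun φ =>
    (Finset.univ.filter fun x : Fin n => IsCopy A'' M (i₁.insertNth x φ.1) φ.2).card with hqdef
  set fib : (Fin m → Fin n) × (Fin t → Fin n) → ℕ := fun φ =>
    ((Finset.univ.filter fun p : (Fin (m + 2) → Fin n) × (Fin t → Fin n) =>
        IsCopy A M p.1 p.2).filter fun p =>
      ((fun k => p.1 (i₁.succ.succAbove (i₁.succAbove k))), p.2) = φ).card with hfibdef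
  have claim1 : copyCount A'' M = ∑ φ : (Fin m → Fin n) × (Fin t → Fin n), q φ := by
    rw [copyCount_eq_card]
    rw [Finset.card_eq_sum_card_fiberwise
      (f := fun p : (Fin (m + 1) → Fin n) × (Fin t → Fin n) =>
        ((fun k => p.1 (i₁.succAbove k)), p.2)) (t := Finset.univ) (fun _ _ => Finset.mem_univ _)]
    refine Finset.sum_congr rfl fun φ _ => ?_
    simp only [hqdef]
    refine Finset.card_nbij' (fun p => p.1 i₁) (fun x => (i₁.insertNth x φ.1, φ.2)) ?_ ?_ ?_ ?_
    · intro p hp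
      rw [Finset.mem_coe, Finset.mem_filter] at hp
      obtain ⟨hp0, heq⟩ := hp
      rw [Finset.mem_filter] at hp0
      have h1 : (fun k => p.1 (i₁.succAbove k)) = φ.1 := congrArg Prod.fst heq
      have h2 : p.2 = φ.2 := congrArg Prod.snd heq
      rw [Finset.mem_coe, Finset.mem_filter]
      refine ⟨Finset.mem_univ _, ?_⟩
      have hre : i₁.insertNth (p.1 i₁) φ.1 = p.1 := by
        rw [← h1]; exact Fin.insertNth_self_removeNth i₁ p.1
      rw [hre, ← h2]
      exact hp0.2
    · intro x hx
      rw [Finset.mem_coe, Finset.mem_filter] at hx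
      rw [Finset.mem_coe, Finset.mem_filter]
      refine ⟨Finset.mem_filter.mpr ⟨Finset.mem_univ _, hx.2⟩, ?_⟩
      rw [Prod.ext_iff]
      constructor
      · funext k
        exact insertNth_app_succAbove i₁ x φ.1 k
      · rfl
    · intro p hp
      rw [Finset.mem_coe, Finset.mem_filter] at hp
      obtain ⟨hp0, heq⟩ := hp
      have h1 : (fun k => p.1 (i₁.succAbove k)) = φ.1 := congrArg Prod.fst heq
      have h2 : p.2 = φ.2 := congrArg Prod.snd heq
      have hre : i₁.insertNth (p.1 i₁) φ.1 = p.1 := by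
        rw [← h1]; exact Fin.insertNth_self_removeNth i₁ p.1
      exact Prod.ext hre h2.symm
    · intro x hx
      exact insertNth_app_same i₁ x φ.1
  have claim3 : copyCount A M = ∑ φ : (Fin m → Fin n) × (Fin t → Fin n), fib φ := by
    rw [copyCount_eq_card]
    rw [Finset.card_eq_sum_card_fiberwise
      (f := fun p : (Fin (m + 2) → Fin n) × (Fin t → Fin n) =>
        ((fun k => p.1 (i₁.succ.succAbove (i₁.succAbove k))), p.2)) (t := Finset.univ)
      (fun _ _ => Finset.mem_univ _)]
  have claim2 : ∀ φ : (Fin m → Fin n) × (Fin t → Fin n), q φ ^ 2 ≤ 2 * fib φ + q φ := by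
    intro φ
    set I : Finset (Fin n) :=
      Finset.univ.filter fun x : Fin n => IsCopy A'' M (i₁.insertNth x φ.1) φ.2 with hIdef
    set P : Finset (Fin n × Fin n) := (I ×ˢ I).filter fun p => p.1 < p.2 with hPdef
    have hoffsplit : I.offDiag = P ∪ ((I ×ˢ I).filter fun p => p.2 < p.1) := by
      ext p
      simp only [Finset.mem_offDiag, hPdef, Finset.mem_union, Finset.mem_filter,
        Finset.mem_product, Finset.mem_univ, true_and]
      constructor
      · rintro ⟨h1, h2, h3⟩
        rcases lt_or_gt_of_ne h3 with h | h
        · exact Or.inl ⟨⟨h1, h2⟩, h⟩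
        · exact Or.inr ⟨⟨h1, h2⟩, h⟩
      · rintro (⟨⟨h1, h2⟩, h⟩ | ⟨⟨h1, h2⟩, h⟩)
        · exact ⟨h1, h2, ne_of_lt h⟩
        · exact ⟨h1, h2, ne_of_gt h⟩
    have hdisj : Disjoint P ((I ×ˢ I).filter fun p => p.2 < p.1) := by
      rw [Finset.disjoint_left]
      intro p hp hp'
      rw [hPdef, Finset.mem_filter] at hp
      rw [Finset.mem_filter] at hp'
      exact absurd (hp.2.trans hp'.2) (lt_irrefl _)
    have hswap : ((I ×ˢ I).filter fun p => p.2 < p.1).card = P.card := by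
      refine Finset.card_nbij' Prod.swap Prod.swap ?_ ?_ ?_ ?_
      · intro p hp
        rw [Finset.mem_coe, Finset.mem_filter, Finset.mem_product] at hp
        rw [hPdef, Finset.mem_coe, Finset.mem_filter, Finset.mem_product]
        exact ⟨⟨hp.1.2, hp.1.1⟩, hp.2⟩
      · intro p hp
        rw [hPdef, Finset.mem_coe, Finset.mem_filter, Finset.mem_product] at hp
        rw [Finset.mem_coe, Finset.mem_filter, Finset.mem_product]
        exact ⟨⟨hp.1.2, hp.1.1⟩, hp.2⟩
      · intro p _; exact Prod.swap_swap p
      · intro p _; exact Prod.swap_swap p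
    have hoffcard : I.offDiag.card = 2 * P.card := by
      rw [hoffsplit, Finset.card_union_of_disjoint hdisj, hswap]
      ring
    have hPcard : I.card ^ 2 = 2 * P.card + I.card := by
      have h1 := Finset.offDiag_card I
      have h2 : I.card ≤ I.card * I.card := by nlinarith [I.card.zero_le]
      rw [hoffcard] at h1
      rw [sq]
      omega
    have hPfib : P.card ≤ fib φ := by
      simp only [hfibdef]
      refine Finset.card_le_card_of_injOn
        (fun xy : Fin n × Fin n => (insF i₁.succ xy.2 (insF i₁ xy.1 φ.1), φ.2)) ?_ ?_
      · intro xy hxy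
        rw [hPdef, Finset.mem_coe, Finset.mem_filter, Finset.mem_product, hIdef] at hxy
        obtain ⟨⟨hx, hy⟩, hlt⟩ := hxy
        rw [Finset.mem_filter] at hx hy
        obtain ⟨hxmono', hcmono, hxtr'⟩ := hx.2
        obtain ⟨hymono', -, hytr'⟩ := hy.2
        have hxmono : StrictMono (insF i₁ xy.1 φ.1) := hxmono'
        have hymono : StrictMono (insF i₁ xy.2 φ.1) := hymono'
        have hxtr : ∀ i j, M (insF i₁ xy.1 φ.1 i) (φ.2 j) = A'' i j := hxtr'
        have hytr : ∀ i j, M (insF i₁ xy.2 φ.1 i) (φ.2 j) = A'' i j := hytr'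
        have hsame1 : insF i₁ xy.1 φ.1 i₁ = xy.1 := insF_same i₁ xy.1 φ.1
        have hsame2 : insF i₁ xy.2 φ.1 i₁ = xy.2 := insF_same i₁ xy.2 φ.1
        have huv : ∀ k : Fin m,
            insF i₁ xy.1 φ.1 (i₁.succAbove k) = insF i₁ xy.2 φ.1 (i₁.succAbove k) := by
          intro k
          rw [insF_succAbove, insF_succAbove]
        have hrmono : StrictMono (insF i₁.succ xy.2 (insF i₁ xy.1 φ.1)) := by
          refine strictMono_insertNth (f := insF i₁ xy.1 φ.1) hxmono ?_ ?_
          · intro k hk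
            have hki : k ≤ i₁ :=
              Fin.castSucc_lt_succ_iff.mp ((Fin.succAbove_lt_iff_castSucc_lt _ _).mp hk)
            calc insF i₁ xy.1 φ.1 k ≤ insF i₁ xy.1 φ.1 i₁ := hxmono.monotone hki
              _ = xy.1 := hsame1
              _ < xy.2 := hlt
          · intro k hk
            have hik : i₁ < k :=
              Fin.succ_le_castSucc_iff.mp ((Fin.lt_succAbove_iff_le_castSucc _ _).mp hk)
            obtain ⟨k', hk'⟩ := Fin.exists_succAbove_eq hik.ne'
            calc xy.2 = insF i₁ xy.2 φ.1 i₁ := hsame2.symm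
              _ < insF i₁ xy.2 φ.1 k := hymono hik
              _ = insF i₁ xy.1 φ.1 k := by rw [← hk']; exact (huv k').symm
        refine Finset.mem_filter.mpr ⟨Finset.mem_filter.mpr ⟨Finset.mem_univ _, ?_⟩, ?_⟩
        · show IsCopy A M (insF i₁.succ xy.2 (insF i₁ xy.1 φ.1)) φ.2
          refine ⟨hrmono, hcmono, ?_⟩
          intro a j
          rcases eq_or_ne i₁.succ a with rfl | ha
          · rw [insF_same]
            have h1 := hytr i₁ j
            rw [hsame2] at h1
            rw [h1]
            simp only [hA''def]
            rw [Fin.succAbove_of_castSucc_lt _ _ (Fin.castSucc_lt_succ (i := i₁))]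
            exact hrow j
          · obtain ⟨k, rfl⟩ := Fin.exists_succAbove_eq ha.symm
            rw [insF_succAbove]
            exact hxtr k j
        · show ((fun k => insF i₁.succ xy.2 (insF i₁ xy.1 φ.1)
              (i₁.succ.succAbove (i₁.succAbove k))), φ.2) = φ
          rw [Prod.ext_iff]
          constructor
          · funext k
            show insF i₁.succ xy.2 (insF i₁ xy.1 φ.1)
              (i₁.succ.succAbove (i₁.succAbove k)) = φ.1 k
            rw [insF_succAbove, insF_succAbove]
          · rfl
      · intro xy hxy xy' hxy' heq
        simp only [Prod.mk.injEq] at heq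
        have h2 : xy.2 = xy'.2 := by
          have h := congrFun heq.1 i₁.succ
          rwa [insF_same, insF_same] at h
        have h1 : xy.1 = xy'.1 := by
          have h := congrFun heq.1 (i₁.succ.succAbove i₁)
          rwa [insF_succAbove, insF_succAbove, insF_same, insF_same] at h
        exact Prod.ext h1 h2
    have hqI : q φ = I.card := by simp only [hqdef, hIdef]
    rw [hqI, hPcard]
    omega
  have hcard : ((Finset.univ : Finset ((Fin m → Fin n) × (Fin t → Fin n))).card : ℝ)
      = (n : ℝ) ^ (m + t) := by
    rw [Finset.card_univ]
    simp [Fintype.card_fun]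
    push_cast
    rw [pow_add]
  have hCS := sq_sum_le_card_mul_sum_sq
    (s := (Finset.univ : Finset ((Fin m → Fin n) × (Fin t → Fin n))))
    (f := fun φ => (q φ : ℝ))
  have hsum2 : ∑ φ : (Fin m → Fin n) × (Fin t → Fin n), (q φ : ℝ) ^ 2 ≤
      2 * (copyCount A M : ℝ) + (copyCount A'' M : ℝ) := by
    rw [claim1, claim3]
    push_cast
    rw [Finset.mul_sum, ← Finset.sum_add_distrib]
    refine Finset.sum_le_sum fun φ _ => ?_
    have h := claim2 φ
    have h' : ((q φ : ℝ)) ^ 2 ≤ 2 * (fib φ : ℝ) + (q φ : ℝ) := by exact_mod_cast h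
    linarith
  calc ((copyCount A'' M : ℝ)) ^ 2
      = (∑ φ : (Fin m → Fin n) × (Fin t → Fin n), (q φ : ℝ)) ^ 2 := by
        rw [claim1]; push_cast; ring
    _ ≤ ((Finset.univ : Finset ((Fin m → Fin n) × (Fin t → Fin n))).card : ℝ) *
        ∑ φ : (Fin m → Fin n) × (Fin t → Fin n), (q φ : ℝ) ^ 2 := hCS
    _ ≤ (n : ℝ) ^ (m + t) * (2 * (copyCount A M : ℝ) + (copyCount A'' M : ℝ)) := by
        rw [hcard]
        exact mul_le_mul_of_nonneg_left hsum2 (by positivity)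

private theorem aux_removal {Γ : Type*} (s : ℕ) : ∀ {s' t : ℕ} (A : Fin s → Fin t → Γ)
    (A' : Fin s' → Fin t → Γ) (ρ : Fin s' → Fin s), StrictMono ρ →
    (∀ i j, A' i j = A (ρ i) j) →
    (∀ i : Fin s, i ∉ Set.range ρ →
      ∃ j : Fin s, (j : ℕ) + 1 = (i : ℕ) ∧ ∀ l, A i l = A j l) →
    ∃ c₁ c₂ : ℝ, ∃ k₁ k₂ : ℕ, 0 < c₁ ∧ 0 < c₂ ∧ 0 < k₁ ∧ 0 < k₂ ∧
      ∀ ε : ℝ, 0 < ε → ε ≤ 1 → ∀ n : ℕ, c₁ / ε ^ k₁ ≤ (n : ℝ) →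
        ∀ M : Fin n → Fin n → Γ,
          ε * (n : ℝ) ^ (s' + t) ≤ (copyCount A' M : ℝ) →
          c₂ * ε ^ k₂ * (n : ℝ) ^ (s + t) ≤ (copyCount A M : ℝ) := by
  induction s using Nat.strong_induction_on with
  | _ s IH =>
  intro s' t A A' ρ hρ hA' hdel
  by_cases hsur : Function.Surjective ρ
  · -- no rows deleted : `ρ` is the identity
    have hcard : s' = s := by
      have := Fintype.card_of_bijective ⟨hρ.injective, hsur⟩
      simpa using this
    subst hcard
    have hid : ρ = id := by
      have h1 : Set.range ρ = Set.range (id : Fin s' → Fin s') := by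
        rw [Set.range_id, Set.range_eq_univ]
        exact hsur
      have hw : WellFoundedLT (Fin s') := inferInstance
      have h2 := @StrictMono.range_inj (Fin s') (Fin s') (inferInstance) (inferInstance)
        hw ρ id hρ strictMono_id
      exact h2.1 h1
    have hAA : A' = A := by
      funext i j
      rw [hA' i j, hid]
      rfl
    refine ⟨1, 1, 1, 1, one_pos, one_pos, one_pos, one_pos, ?_⟩
    intro ε hε hε1 n hn M hM
    rw [hAA] at hM
    simpa using hM
  · -- some row is deleted
    simp only [Function.Surjective, not_forall] at hsur
    obtain ⟨i₀, hi₀⟩ := hsur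
    have hi₀' : i₀ ∉ Set.range ρ := by
      simpa [Set.mem_range] using hi₀
    obtain ⟨j₀, hj₀, hrow₀⟩ := hdel i₀ hi₀'
    have hi₀lt : (i₀ : ℕ) < s := i₀.isLt
    have hs2 : ∃ m, s = m + 2 := ⟨s - 2, by omega⟩
    obtain ⟨m, rfl⟩ := hs2
    set i₁ : Fin (m + 1) := ⟨(j₀ : ℕ), by omega⟩ with hi₁def
    have hi₁val : (i₁ : ℕ) = (j₀ : ℕ) := by rw [hi₁def]
    have hi₁succ : i₁.succ = i₀ := by
      apply Fin.ext
      rw [Fin.val_succ, hi₁val]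
      omega
    have hi₀val : (i₀ : ℕ) = (i₁.succ : ℕ) := by rw [hi₁succ]
    have hqval : (i₁.succ : ℕ) = (j₀ : ℕ) + 1 := by rw [Fin.val_succ, hi₁val]
    have hrow' : ∀ l, A i₁.castSucc l = A i₁.succ l := by
      intro l
      have h1 : i₁.castSucc = j₀ := by
        apply Fin.ext
        rw [Fin.coe_castSucc, hi₁val]
      rw [h1, hi₁succ]
      exact (hrow₀ l).symm
    have hne : ∀ x, ρ x ≠ i₁.succ := fun x h => hi₀' ⟨x, by rw [h, hi₁succ]⟩
    choose ρ' hρ'spec using fun x => Fin.exists_succAbove_eq (hne x)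
    have hρ' : StrictMono ρ' := by
      intro a b hab
      have h := hρ hab
      rw [← hρ'spec a, ← hρ'spec b] at h
      exact Fin.succAbove_lt_succAbove_iff.mp h
    have hA''ρ : ∀ x j, A' x j = (fun k l => A (i₁.succ.succAbove k) l) (ρ' x) j := by
      intro x j
      rw [hA' x j]
      show A (ρ x) j = A (i₁.succ.succAbove (ρ' x)) j
      rw [hρ'spec x]
    have hdel'' : ∀ k : Fin (m + 1), k ∉ Set.range ρ' →
        ∃ j' : Fin (m + 1), (j' : ℕ) + 1 = (k : ℕ) ∧
          ∀ l, (fun k l => A (i₁.succ.succAbove k) l) k l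
            = (fun k l => A (i₁.succ.succAbove k) l) j' l := by
      intro k hk
      show ∃ j' : Fin (m + 1), (j' : ℕ) + 1 = (k : ℕ) ∧
          ∀ l, A (i₁.succ.succAbove k) l = A (i₁.succ.succAbove j') l
      have hky : i₁.succ.succAbove k ∉ Set.range ρ := by
        rintro ⟨x, hx⟩
        exact hk ⟨x, Fin.succAbove_right_injective (by rw [hρ'spec x, hx])⟩
      obtain ⟨jy, hjy, hjrow⟩ := hdel _ hky
      have hyval := succAbove_val i₁.succ k
      have hkpos : 1 ≤ (k : ℕ) := by
        rcases Nat.lt_or_ge (k : ℕ) (i₁.succ : ℕ) with hlt | hge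
        · rw [hyval, if_pos hlt] at hjy
          omega
        · omega
      refine ⟨⟨(k : ℕ) - 1, by omega⟩, by simp; omega, ?_⟩
      intro l
      rcases Nat.lt_or_ge (k : ℕ) (i₁.succ : ℕ) with hlt | hge
      · have h1 : i₁.succ.succAbove ⟨(k : ℕ) - 1, by omega⟩ = jy := by
          apply Fin.ext
          rw [succAbove_val]
          rw [hyval, if_pos hlt] at hjy
          simp only
          rw [if_pos (by omega)]
          omega
        rw [h1]
        exact hjrow l
      · rw [hyval, if_neg (by omega)] at hjy
        rcases Nat.lt_or_ge ((k : ℕ) - 1) (i₁.succ : ℕ) with hlt2 | hge2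
        · -- k = i₁.succ as values; use the duplicated row at i₀
          have hjyi : jy = i₀ := by
            apply Fin.ext
            omega
          have hj'j₀ : i₁.succ.succAbove ⟨(k : ℕ) - 1, by omega⟩ = j₀ := by
            apply Fin.ext
            rw [succAbove_val]
            simp only
            rw [if_pos (by omega)]
            omega
          rw [hj'j₀]
          calc A (i₁.succ.succAbove k) l = A jy l := hjrow l
            _ = A i₀ l := by rw [hjyi]
            _ = A j₀ l := hrow₀ l
        · have h1 : i₁.succ.succAbove ⟨(k : ℕ) - 1, by omega⟩ = jy := by
            apply Fin.ext
            rw [succAbove_val]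
            simp only
            rw [if_neg (by omega)]
            omega
          rw [h1]
          exact hjrow l
    obtain ⟨c₁', c₂', k₁', k₂', hc₁', hc₂', hk₁', hk₂', hmain'⟩ :=
      IH (m + 1) (by omega) (fun k l => A (i₁.succ.succAbove k) l) A' ρ' hρ' hA''ρ hdel''
    set d : ℝ := min c₂' 1 with hddef
    have hd0 : 0 < d := lt_min hc₂' one_pos
    have hd1 : d ≤ 1 := min_le_right _ _
    refine ⟨max c₁' (2 / d ^ 2), d ^ 2 / 4, max k₁' (2 * k₂'), 2 * k₂',
      lt_of_lt_of_le hc₁' (le_max_left _ _), by positivity, by omega, by omega, ?_⟩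
    intro ε hε hε1 n hn M hM
    have hεpos : ∀ k : ℕ, (0:ℝ) < ε ^ k := fun k => pow_pos hε k
    have hεk : ∀ a b : ℕ, a ≤ b → ε ^ b ≤ ε ^ a :=
      fun a b h => pow_le_pow_of_le_one hε.le hε1 h
    have hn1 : c₁' / ε ^ k₁' ≤ (n : ℝ) :=
      le_trans (div_le_div₀ (le_trans hc₁'.le (le_max_left _ _)) (le_max_left _ _)
        (hεpos _) (hεk _ _ (le_max_left _ _))) hn
    have hn2 : (2 / d ^ 2) / ε ^ (2 * k₂') ≤ (n : ℝ) :=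
      le_trans (div_le_div₀ (le_trans (by positivity) (le_max_right c₁' (2 / d ^ 2)))
        (le_max_right _ _) (hεpos _) (hεk _ _ (le_max_right _ _))) hn
    have hA''count := hmain' ε hε hε1 n hn1 M hM
    have hd' : d * ε ^ k₂' * (n : ℝ) ^ ((m + 1) + t) ≤
        (copyCount (fun k l => A (i₁.succ.succAbove k) l) M : ℝ) := by
      refine le_trans ?_ hA''count
      have h := min_le_left c₂' 1
      have hx : (0:ℝ) ≤ ε ^ k₂' * (n : ℝ) ^ ((m + 1) + t) := by positivity
      calc d * ε ^ k₂' * (n : ℝ) ^ ((m + 1) + t)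
          = d * (ε ^ k₂' * (n : ℝ) ^ ((m + 1) + t)) := by ring
        _ ≤ c₂' * (ε ^ k₂' * (n : ℝ) ^ ((m + 1) + t)) := mul_le_mul_of_nonneg_right h hx
        _ = c₂' * ε ^ k₂' * (n : ℝ) ^ ((m + 1) + t) := by ring
    have hub : (copyCount (fun k l => A (i₁.succ.succAbove k) l) M : ℝ) ≤
        (n : ℝ) ^ ((m + 1) + t) := by
      have h := copyCount_le (fun k l => A (i₁.succ.succAbove k) l) M
      calc (copyCount (fun k l => A (i₁.succ.succAbove k) l) M : ℝ)
          ≤ ((n ^ (m + 1) * n ^ t : ℕ) : ℝ) := by exact_mod_cast h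
        _ = (n : ℝ) ^ ((m + 1) + t) := by push_cast; rw [← pow_add]
    have hstep := step_lemma A i₁ hrow' M
    have hNpos : (0:ℝ) < (n : ℝ) := by
      have h : (0:ℝ) < (2 / d ^ 2) / ε ^ (2 * k₂') := by positivity
      linarith
    set C := (copyCount A M : ℝ) with hCdef
    set B := (copyCount (fun k l => A (i₁.succ.succAbove k) l) M : ℝ) with hBdef
    have hC0 : 0 ≤ C := by rw [hCdef]; positivity
    set δ : ℝ := d * ε ^ k₂' with hδdef
    have hδ0 : 0 < δ := by positivity
    have h2δ : 2 ≤ δ ^ 2 * (n : ℝ) := by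
      have he : (2 / d ^ 2) / ε ^ (2 * k₂') = 2 / δ ^ 2 := by
        rw [hδdef, mul_pow, ← pow_mul]
        ring
      rw [he, div_le_iff₀ (by positivity)] at hn2
      linarith
    have hYpos : (0:ℝ) < (n : ℝ) ^ ((m + 1) + t) := pow_pos hNpos _
    have hXpos : (0:ℝ) < (n : ℝ) ^ (m + t) := pow_pos hNpos _
    have key : δ ^ 2 * ((n : ℝ) ^ ((m + 1) + t) * (n : ℝ)) ≤
        2 * C + (n : ℝ) ^ ((m + 1) + t) := by
      have h1 : (δ * (n : ℝ) ^ ((m + 1) + t)) ^ 2 ≤ B ^ 2 := by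
        have hB0 : (0:ℝ) ≤ δ * (n : ℝ) ^ ((m + 1) + t) := by positivity
        exact pow_le_pow_left₀ hB0 hd' 2
      have hpow : (n : ℝ) ^ (m + t) * ((n : ℝ) ^ ((m + 1) + t) * (n : ℝ)) =
          ((n : ℝ) ^ ((m + 1) + t)) ^ 2 := by
        rw [← pow_succ, ← pow_add, ← pow_mul]
        congr 1
        omega
      have h2 : B ^ 2 ≤ (n : ℝ) ^ (m + t) * (2 * C + B) := hstep
      have h3 : (n : ℝ) ^ (m + t) * (2 * C + B) ≤
          (n : ℝ) ^ (m + t) * (2 * C + (n : ℝ) ^ ((m + 1) + t)) :=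
        mul_le_mul_of_nonneg_left (by linarith [hub]) hXpos.le
      have h4 : (n : ℝ) ^ (m + t) * (δ ^ 2 * ((n : ℝ) ^ ((m + 1) + t) * (n : ℝ))) ≤
          (n : ℝ) ^ (m + t) * (2 * C + (n : ℝ) ^ ((m + 1) + t)) := by
        calc (n : ℝ) ^ (m + t) * (δ ^ 2 * ((n : ℝ) ^ ((m + 1) + t) * (n : ℝ)))
            = δ ^ 2 * ((n : ℝ) ^ (m + t) * ((n : ℝ) ^ ((m + 1) + t) * (n : ℝ))) := by ring
          _ = δ ^ 2 * ((n : ℝ) ^ ((m + 1) + t)) ^ 2 := by rw [hpow]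
          _ = (δ * (n : ℝ) ^ ((m + 1) + t)) ^ 2 := by ring
          _ ≤ B ^ 2 := h1
          _ ≤ (n : ℝ) ^ (m + t) * (2 * C + B) := h2
          _ ≤ (n : ℝ) ^ (m + t) * (2 * C + (n : ℝ) ^ ((m + 1) + t)) := h3
      exact le_of_mul_le_mul_left h4 hXpos
    have hgoal : d ^ 2 / 4 * ε ^ (2 * k₂') * (n : ℝ) ^ ((m + 2) + t) ≤ C := by
      have he : d ^ 2 / 4 * ε ^ (2 * k₂') = δ ^ 2 / 4 := by
        rw [hδdef, mul_pow, ← pow_mul]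
        ring
      have hpow2 : (n : ℝ) ^ ((m + 2) + t) = (n : ℝ) ^ ((m + 1) + t) * (n : ℝ) := by
        rw [← pow_succ]
        congr 1
        omega
      rw [he, hpow2]
      nlinarith [mul_le_mul_of_nonneg_left h2δ hYpos.le]
    exact hgoal

/-- Let `A` be an `s × t` matrix over a finite alphabet `Γ` and let `A'`
be an `s' × t` matrix obtained from `A` by deleting some set of rows, each equal to the row
of `A` immediately preceding it (the kept rows are given by the strictly increasing map
`ρ`). There are constants `c₁, k₁, c₂, k₂ > 0` such that for every `ε ∈ (0,1]` and every
`n ≥ c₁·ε^{-k₁}`: every `n × n` matrix `M` over `Γ` containing at least `ε·n^(s'+t)` copies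
of `A'` contains at least `c₂·ε^(k₂)·n^(s+t)` copies of `A`. -/
theorem row_unfold_removal {Γ : Type*} [Fintype Γ] {s s' t : ℕ}
    (A : Fin s → Fin t → Γ) (A' : Fin s' → Fin t → Γ)
    (ρ : Fin s' → Fin s) (hρ : StrictMono ρ)
    (hA' : ∀ i j, A' i j = A (ρ i) j)
    (hdel : ∀ i : Fin s, i ∉ Set.range ρ →
      ∃ j : Fin s, (j : ℕ) + 1 = (i : ℕ) ∧ ∀ l, A i l = A j l) :
    ∃ c₁ c₂ : ℝ, ∃ k₁ k₂ : ℕ, 0 < c₁ ∧ 0 < c₂ ∧ 0 < k₁ ∧ 0 < k₂ ∧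
      ∀ ε : ℝ, 0 < ε → ε ≤ 1 → ∀ n : ℕ, c₁ / ε ^ k₁ ≤ (n : ℝ) →
        ∀ M : Fin n → Fin n → Γ,
          ε * (n : ℝ) ^ (s' + t) ≤ (copyCount A' M : ℝ) →
          c₂ * ε ^ k₂ * (n : ℝ) ^ (s + t) ≤ (copyCount A M : ℝ) := by
  exact aux_removal s A A' ρ hρ hA' hdel
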